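/- For all η > 0, it holds that 1 ≤ η·(log(η+1)+1)/((η+1)·log(η+1)) ≤ 2. -/

import Mathlib

/-- For all `η > 0`: `1 ≤ η (log(η+1)+1)/((η+1) log(η+1)) ≤ 2`. -/
theorem stmt14 (η : ℝ) (hη : 0 < η) :
    1 ≤ η * (Real.log (η + 1) + 1) / ((η + 1) * Real.log (η + 1)) ∧
    η * (Real.log (η + 1) + 1) / ((η + 1) * Real.log (η + 1)) ≤ 2 := by
  set L := Real.log (η + 1) with hL
  have hLpos : 0 < L := Real.log_pos (by linarith)
  have hden : 0 < (η + 1) * L := by positivity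
  have hle : L ≤ η := by
    have := Real.log_le_sub_one_of_pos (by linarith : (0:ℝ) < η + 1)
    linarith
  have hge : η / (η + 1) ≤ L := by
    have h := Real.one_sub_inv_le_log_of_pos (by linarith : (0:ℝ) < η + 1)
    have h2 : 1 - (η + 1)⁻¹ = η / (η + 1) := by field_simp; ring
    rw [h2] at h
    exact h
  constructor
  · rw [le_div_iff₀ hden]; nlinarith
  · rw [div_le_iff₀ hden]
    have h3 : η ≤ L * (η + 1) := by
      rw [div_le_iff₀ (by linarith : (0:ℝ) < η + 1)] at hge; linarith
    nlinarith
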